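/- arXiv:2202.04957 — 7 statements merged into one kernel-verified Lean document; each statement's English description precedes it below -/
import Mathlib

section
/- Let G be a finite simple graph on n vertices with Laplacian matrix L, let a, b be twin vertices of G, let M = (e_a - e_b)(e_a - e_b)^T, and let α ∈ ℝ. Then for all t ∈ ℝ, exp(-i t (L + α M)) = exp(-i t L) · (I + (1/2)(exp(-2 i α t) - 1) M). -/
open Matrix Complex Nat

lemma exp_smul_idem_aux {A : Type*} [NormedRing A] [NormedAlgebra ℂ A] [CompleteSpace A]
    (P : A) (hP : P * P = P) (s : ℂ) :
    NormedSpace.exp (s • P) = 1 + (Complex.exp s - 1) • P := by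
  have hPk : ∀ k : ℕ, P ^ (k + 1) = P := by
    intro k; induction k with
    | zero => simp
    | succ k ih => rw [pow_succ, ih, hP]
  have hsum : Summable fun k : ℕ => (Nat.factorial k : ℂ)⁻¹ • (s • P) ^ k :=
    NormedSpace.expSeries_summable' (𝕂 := ℂ) (s • P)
  have hscalar : Summable fun k : ℕ => (Nat.factorial k : ℂ)⁻¹ * s ^ k := by
    simpa [smul_eq_mul] using NormedSpace.expSeries_summable' (𝕂 := ℂ) s
  have hscalar' : Summable fun k : ℕ => (Nat.factorial (k + 1) : ℂ)⁻¹ * s ^ (k + 1) :=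
    (summable_nat_add_iff (f := fun k : ℕ => (Nat.factorial k : ℂ)⁻¹ * s ^ k) 1).2 hscalar
  rw [NormedSpace.exp_eq_tsum ℂ]
  beta_reduce
  rw [hsum.tsum_eq_zero_add]
  have h1 : (Nat.factorial 0 : ℂ)⁻¹ • (s • P) ^ 0 = 1 := by simp
  have h2 : ∀ k : ℕ, (Nat.factorial (k + 1) : ℂ)⁻¹ • (s • P) ^ (k + 1)
      = ((Nat.factorial (k + 1) : ℂ)⁻¹ * s ^ (k + 1)) • P := by
    intro k
    rw [smul_pow, hPk, smul_smul]
  rw [h1]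
  congr 1
  calc ∑' k : ℕ, (Nat.factorial (k + 1) : ℂ)⁻¹ • (s • P) ^ (k + 1)
      = ∑' k : ℕ, ((Nat.factorial (k + 1) : ℂ)⁻¹ * s ^ (k + 1)) • P := by simp_rw [h2]
    _ = (∑' k : ℕ, (Nat.factorial (k + 1) : ℂ)⁻¹ * s ^ (k + 1)) • P := Summable.tsum_smul_const hscalar' P
    _ = (Complex.exp s - 1) • P := by
        congr 1
        have he := congrFun Complex.exp_eq_exp_ℂ s
        rw [NormedSpace.exp_eq_tsum ℂ] at he
        beta_reduce at he
        have he2 : Complex.exp s = ∑' k : ℕ, (Nat.factorial k : ℂ)⁻¹ * s ^ k := by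
          simpa [smul_eq_mul] using he
        rw [he2, Summable.tsum_eq_zero_add (f := fun k : ℕ => (Nat.factorial k : ℂ)⁻¹ * s ^ k) hscalar]
        simp

lemma exp_smul_idem {n : ℕ} (P : Matrix (Fin n) (Fin n) ℂ) (hP : P * P = P) (s : ℂ) :
    NormedSpace.exp (s • P) = 1 + (Complex.exp s - 1) • P := by
  letI : SeminormedRing (Matrix (Fin n) (Fin n) ℂ) := Matrix.linftyOpSemiNormedRing
  letI : NormedRing (Matrix (Fin n) (Fin n) ℂ) := Matrix.linftyOpNormedRing
  letI : NormedAlgebra ℂ (Matrix (Fin n) (Fin n) ℂ) := Matrix.linftyOpNormedAlgebra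
  exact exp_smul_idem_aux P hP s

theorem transition_matrix_of_twin_edge_perturbation
    {n : ℕ} (G : SimpleGraph (Fin n)) [DecidableRel G.Adj]
    (a b : Fin n) (hab : a ≠ b)
    (htwin : ∀ v : Fin n, v ≠ a → v ≠ b → (G.Adj a v ↔ G.Adj b v)) (α : ℝ) :
    ∀ t : ℝ,
      NormedSpace.exp ((-(Complex.I * (t : ℂ))) •
          (G.lapMatrix ℂ + (α : ℂ) •
            vecMulVec ((Pi.single a 1 : Fin n → ℂ) - Pi.single b 1)
              ((Pi.single a 1 : Fin n → ℂ) - Pi.single b 1)))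
        = NormedSpace.exp ((-(Complex.I * (t : ℂ))) • G.lapMatrix ℂ) *
          (1 + ((1 / 2 : ℂ) * (Complex.exp (-(2 * Complex.I * (α : ℂ) * (t : ℂ))) - 1)) •
            vecMulVec ((Pi.single a 1 : Fin n → ℂ) - Pi.single b 1)
              ((Pi.single a 1 : Fin n → ℂ) - Pi.single b 1)) := by
  intro t
  set w : Fin n → ℂ := (Pi.single a 1 : Fin n → ℂ) - Pi.single b 1 with hw
  set M : Matrix (Fin n) (Fin n) ℂ := vecMulVec w w with hM
  set L : Matrix (Fin n) (Fin n) ℂ := G.lapMatrix ℂ with hL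
  have hwv : ∀ v, w v = if v = a then 1 else if v = b then -1 else 0 := by
    intro v
    by_cases h1 : v = a
    · subst h1; simp [hw, Pi.single_apply, hab.symm]
    · by_cases h2 : v = b
      · subst h2; simp [hw, Pi.single_apply, h1]
      · simp [hw, Pi.single_apply, h1, h2]
  have hsymm : ∀ v u, L v u = L u v := fun v u => ((G.isSymm_lapMatrix (R := ℂ)).apply u v)
  -- degrees of twins agree
  have hdeg : G.degree b = G.degree a := by
    rw [← SimpleGraph.card_neighborFinset_eq_degree, ← SimpleGraph.card_neighborFinset_eq_degree]
    apply Finset.card_bij' (fun x _ => Equiv.swap a b x) (fun x _ => Equiv.swap a b x)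
    · intro x hx
      rw [SimpleGraph.mem_neighborFinset] at hx ⊢
      by_cases h1 : x = a
      · subst h1; rw [Equiv.swap_apply_left]; exact hx.symm
      · by_cases h2 : x = b
        · subst h2; simp at hx
        · rw [Equiv.swap_apply_of_ne_of_ne h1 h2]
          exact (htwin x h1 h2).mpr hx
    · intro x hx
      rw [SimpleGraph.mem_neighborFinset] at hx ⊢
      by_cases h1 : x = a
      · subst h1; simp at hx
      · by_cases h2 : x = b
        · subst h2; rw [Equiv.swap_apply_right]; exact hx.symm
        · rw [Equiv.swap_apply_of_ne_of_ne h1 h2]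
          exact (htwin x h1 h2).mp hx
    · intro x _; simp
    · intro x _; simp
  have hLab : L a b = L b a := hsymm a b
  have hLaa : L a a - L b b = 0 := by
    rw [hL]
    simp [SimpleGraph.lapMatrix, SimpleGraph.degMatrix, Matrix.sub_apply,
      Matrix.diagonal_apply, hdeg]
  set c : ℂ := L a a - L b a with hc
  have key : ∀ v, L a v - L b v = c * w v := by
    intro v
    by_cases h1 : v = a
    · subst h1; rw [hwv]; simp [hc]
    · by_cases h2 : v = b
      · subst h2
        rw [hwv, if_neg (Ne.symm hab), if_pos rfl]
        rw [hc, ← hLab]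
        linear_combination hLaa
      · rw [hwv]
        simp only [h1, h2, ite_false]
        rw [mul_zero, sub_eq_zero, hL]
        simp [SimpleGraph.lapMatrix, SimpleGraph.degMatrix, Matrix.sub_apply,
          Matrix.diagonal_apply, SimpleGraph.adjMatrix_apply,
          (Ne.symm h1 : a ≠ v), (Ne.symm h2 : b ≠ v), htwin v h1 h2]
  have hrow : ∀ X : Matrix (Fin n) (Fin n) ℂ, ∀ v, ∑ k, X v k * w k = X v a - X v b := by
    intro X v
    simp [hw, Pi.single_apply, mul_sub, Finset.sum_sub_distrib, mul_ite, mul_one, mul_zero]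
  have hcomm : L * M = M * L := by
    ext v u
    rw [Matrix.mul_apply, Matrix.mul_apply]
    simp only [hM, vecMulVec_apply]
    have e1 : ∑ k, L v k * (w k * w u) = (∑ k, L v k * w k) * w u := by
      rw [Finset.sum_mul]; exact Finset.sum_congr rfl fun k _ => by ring
    have e2 : ∑ k, w v * w k * L k u = (∑ k, L u k * w k) * w v := by
      rw [Finset.sum_mul]; exact Finset.sum_congr rfl fun k _ => by
        rw [hsymm k u]; ring
    rw [e1, e2, hrow, hrow, hsymm v a, hsymm v b, hsymm u a, hsymm u b, key, key]
    ring
  have hdot : ∑ k, w k * w k = 2 := by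
    have h2 : ∀ k, w k * w k = (if k = a then 1 else 0) + (if k = b then 1 else 0) := by
      intro k
      rw [hwv]
      by_cases h1 : k = a
      · subst h1; simp [hab, Ne.symm hab]
      · by_cases h2 : k = b
        · subst h2; simp [h1]
        · simp [h1, h2]
    simp_rw [h2]
    rw [Finset.sum_add_distrib]
    simp
    norm_num
  have hM2 : M * M = (2 : ℂ) • M := by
    ext i j
    rw [Matrix.mul_apply]
    simp only [hM, vecMulVec_apply, Matrix.smul_apply, smul_eq_mul]
    calc ∑ k, w i * w k * (w k * w j) = (∑ k, w k * w k) * (w i * w j) := by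
          rw [Finset.sum_mul]; exact Finset.sum_congr rfl fun k _ => by ring
      _ = 2 * (w i * w j) := by rw [hdot]
  have hP : ((1 / 2 : ℂ) • M) * ((1 / 2 : ℂ) • M) = (1 / 2 : ℂ) • M := by
    rw [smul_mul_assoc, mul_smul_comm, hM2, smul_smul, smul_smul]
    norm_num
  have step1 : (-(Complex.I * (t : ℂ))) • (L + (α : ℂ) • M)
      = (-(Complex.I * (t : ℂ))) • L + ((-(Complex.I * (t : ℂ)) * α * 2)) • ((1 / 2 : ℂ) • M) := by
    rw [smul_add, smul_smul, smul_smul]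
    congr 2
    ring_nf
  rw [step1, Matrix.exp_add_of_commute]
  · rw [exp_smul_idem _ hP, smul_smul]
    have harg : (-(Complex.I * (t : ℂ)) * (α : ℂ) * 2) = -(2 * Complex.I * (α : ℂ) * (t : ℂ)) := by
      ring
    rw [harg]
    congr 2
    ring_nf
  · have hc2 : Commute L M := hcomm
    exact ((hc2.smul_right _).smul_right _).smul_left _
end

section
/- Let G be a graph with Laplacian L, a, b twin vertices, M = (e_a - e_b)(e_a - e_b)^T, α ∈ ℝ. Then for all t ∈ ℝ, exp(-i t (L + α M))(e_a - e_b) = exp(-2 i α t) · exp(-i t L)(e_a - e_b). -/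
open Matrix Complex

open scoped Nat

open NormedSpace in
lemma exp_mulVec_eigen {n : ℕ} (A : Matrix (Fin n) (Fin n) ℂ) (v : Fin n → ℂ) (μ : ℂ)
    (h : A.mulVec v = μ • v) :
    (NormedSpace.exp A).mulVec v = Complex.exp μ • v := by
  letI : SeminormedRing (Matrix (Fin n) (Fin n) ℂ) := Matrix.linftyOpSemiNormedRing
  letI : NormedRing (Matrix (Fin n) (Fin n) ℂ) := Matrix.linftyOpNormedRing
  letI : NormedAlgebra ℂ (Matrix (Fin n) (Fin n) ℂ) := Matrix.linftyOpNormedAlgebra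
  have hpow : ∀ k : ℕ, (A ^ k).mulVec v = μ ^ k • v := by
    intro k
    induction k with
    | zero => simp
    | succ k ih =>
        rw [pow_succ', ← Matrix.mulVec_mulVec, ih, Matrix.mulVec_smul, h, smul_smul, ← pow_succ]
  have hsum : Summable fun k : ℕ => ((k ! : ℂ)⁻¹) • A ^ k := expSeries_summable' A
  let T : Matrix (Fin n) (Fin n) ℂ →ₗ[ℂ] (Fin n → ℂ) :=
    { toFun := fun M => M.mulVec v
      map_add' := fun M N => Matrix.add_mulVec M N v
      map_smul' := fun c M => Matrix.smul_mulVec c M v }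
  have hT : Continuous T := T.continuous_of_finiteDimensional
  have hmap : T (∑' k : ℕ, ((k ! : ℂ)⁻¹) • A ^ k)
      = ∑' k : ℕ, T (((k ! : ℂ)⁻¹) • A ^ k) :=
    ((hsum.hasSum.map T.toAddMonoidHom hT).tsum_eq).symm
  have hTk : ∀ k : ℕ, T (((k ! : ℂ)⁻¹) • A ^ k) = (((k ! : ℂ)⁻¹) • μ ^ k) • v := by
    intro k
    show (((k ! : ℂ)⁻¹) • A ^ k).mulVec v = _
    rw [Matrix.smul_mulVec, hpow, smul_smul, smul_eq_mul]
  have key : (NormedSpace.exp A).mulVec v = ∑' k : ℕ, (((k ! : ℂ)⁻¹) • μ ^ k) • v := by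
    rw [exp_eq_tsum ℂ]
    exact hmap.trans (tsum_congr hTk)
  rw [key, (expSeries_summable' (𝕂 := ℂ) μ).tsum_smul_const]
  congr 1
  rw [Complex.exp_eq_exp_ℂ, exp_eq_tsum ℂ]

theorem twin_pair_state_evolves_up_to_phase
    {n : ℕ} (G : SimpleGraph (Fin n)) [DecidableRel G.Adj]
    (a b : Fin n) (hab : a ≠ b)
    (htwin : ∀ v : Fin n, v ≠ a → v ≠ b → (G.Adj a v ↔ G.Adj b v)) (α : ℝ) :
    ∀ t : ℝ,
      (NormedSpace.exp ((-(Complex.I * (t : ℂ))) •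
          (G.lapMatrix ℂ + (α : ℂ) •
            vecMulVec ((Pi.single a 1 : Fin n → ℂ) - Pi.single b 1)
              ((Pi.single a 1 : Fin n → ℂ) - Pi.single b 1)))).mulVec
          ((Pi.single a 1 : Fin n → ℂ) - Pi.single b 1)
        = Complex.exp (-(2 * Complex.I * (α : ℂ) * (t : ℂ))) •
          (NormedSpace.exp ((-(Complex.I * (t : ℂ))) • G.lapMatrix ℂ)).mulVec
            ((Pi.single a 1 : Fin n → ℂ) - Pi.single b 1) := by
  intro t
  set v : Fin n → ℂ := (Pi.single a 1 : Fin n → ℂ) - Pi.single b 1 with hv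
  -- adjacency is preserved by swapping the twins
  have key : ∀ w : Fin n, G.Adj a w ↔ G.Adj b (Equiv.swap a b w) := by
    intro w
    rcases eq_or_ne w a with hwa | hwa
    · obtain rfl := hwa.symm
      simp [Equiv.swap_apply_left]
    rcases eq_or_ne w b with hwb | hwb
    · obtain rfl := hwb.symm
      rw [Equiv.swap_apply_right]; exact G.adj_comm a b
    · rw [Equiv.swap_apply_of_ne_of_ne hwa hwb]; exact htwin w hwa hwb
  -- degrees are equal
  have hdeg : G.degree a = G.degree b := by
    unfold SimpleGraph.degree
    rw [← Finset.card_map (Equiv.swap a b).toEmbedding]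
    congr 1
    ext w
    rw [Finset.mem_map_equiv, Equiv.symm_swap, SimpleGraph.mem_neighborFinset,
      SimpleGraph.mem_neighborFinset]
    have := key (Equiv.swap a b w)
    rwa [Equiv.swap_apply_self] at this
  set μ : ℂ := (G.degree a : ℂ) + (if G.Adj a b then 1 else 0) with hμ
  -- eigenvector of the Laplacian
  have hsum : ∀ u : Fin n, ∑ w ∈ G.neighborFinset u, v w
      = (if G.Adj u a then 1 else 0) - (if G.Adj u b then 1 else 0) := by
    intro u
    simp only [hv, Pi.sub_apply, Finset.sum_sub_distrib, Pi.single_apply]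
    rw [Finset.sum_ite_eq' _ a, Finset.sum_ite_eq' _ b]
    simp [SimpleGraph.mem_neighborFinset]
  have hva : v a = 1 := by simp [hv, Pi.single_apply, hab]
  have hvb : v b = -1 := by simp [hv, Pi.single_apply, hab.symm]
  have hL : (G.lapMatrix ℂ).mulVec v = μ • v := by
    funext u
    rw [SimpleGraph.lapMatrix_mulVec_apply, hsum]
    rcases eq_or_ne u a with hu | hua
    · obtain rfl := hu.symm
      simp only [Pi.smul_apply, hva, hμ, smul_eq_mul]
      rw [if_neg (G.irrefl)]
      ring
    rcases eq_or_ne u b with hu | hub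
    · obtain rfl := hu.symm
      have h1 : G.Adj b a ↔ G.Adj a b := G.adj_comm b a
      simp only [Pi.smul_apply, hvb, hμ, smul_eq_mul]
      rw [if_neg (G.irrefl), hdeg]
      simp only [h1]
      ring
    · have h0 : v u = 0 := by simp [hv, Pi.single_apply, hua, hub]
      have h2 : G.Adj u a ↔ G.Adj u b := by
        rw [G.adj_comm u a, G.adj_comm u b]; exact htwin u hua hub
      simp [h0, h2]
  -- eigenvector of the rank one perturbation
  have hM : (vecMulVec v v).mulVec v = (2 : ℂ) • v := by
    funext u
    simp only [Matrix.mulVec, Matrix.vecMulVec_apply, dotProduct, Pi.smul_apply,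
      smul_eq_mul]
    have hsq : ∀ w : Fin n, v w * v w = (if w = a then 1 else 0) + (if w = b then 1 else 0) := by
      intro w
      rcases eq_or_ne w a with hwa | hwa
      · obtain rfl := hwa.symm
        simp [hva, hab]
      rcases eq_or_ne w b with hwb | hwb
      · obtain rfl := hwb.symm
        simp [hvb, hwa]
      · simp [hv, Pi.single_apply, hwa, hwb]
    calc ∑ j, v u * v j * v j = v u * ∑ j, v j * v j := by
          rw [Finset.mul_sum]; exact Finset.sum_congr rfl fun j _ => by ring
      _ = 2 * v u := by
          simp only [hsq, Finset.sum_add_distrib, Finset.sum_ite_eq', Finset.mem_univ, if_pos]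
          ring
  -- combine
  have hTot : ((-(Complex.I * (t : ℂ))) •
      (G.lapMatrix ℂ + (α : ℂ) • vecMulVec v v)).mulVec v
      = ((-(Complex.I * (t : ℂ))) * (μ + 2 * (α : ℂ))) • v := by
    rw [Matrix.smul_mulVec, Matrix.add_mulVec, hL, Matrix.smul_mulVec, hM]
    rw [smul_smul, smul_add, smul_smul, smul_smul, ← add_smul]
    congr 1
    ring
  have hLt : ((-(Complex.I * (t : ℂ))) • G.lapMatrix ℂ).mulVec v
      = ((-(Complex.I * (t : ℂ))) * μ) • v := by
    rw [Matrix.smul_mulVec, hL, smul_smul]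
  rw [exp_mulVec_eigen _ v _ hTot, exp_mulVec_eigen _ v _ hLt, smul_smul, ← Complex.exp_add]
  congr 2
  ring
end

section
/- Let G be a graph with Laplacian L, a, b twin vertices, M = (e_a - e_b)(e_a - e_b)^T, α ∈ ℝ. For any p, q both distinct from a and b and any t ∈ ℝ, exp(-i t (L + α M))(e_p - e_q) = exp(-i t L)(e_p - e_q). Hence if G has Pair-LPST from e_p - e_q to e_c - e_d at time τ, so does G + α{a,b}. -/
open Matrix Complex

private theorem exp_mulVec_congr {n : ℕ} (A B : Matrix (Fin n) (Fin n) ℂ)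
    (v : Fin n → ℂ) (h : ∀ k : ℕ, (A ^ k).mulVec v = (B ^ k).mulVec v) :
    (NormedSpace.exp A).mulVec v = (NormedSpace.exp B).mulVec v := by
  letI : SeminormedRing (Matrix (Fin n) (Fin n) ℂ) := Matrix.linftyOpSemiNormedRing
  letI : NormedRing (Matrix (Fin n) (Fin n) ℂ) := Matrix.linftyOpNormedRing
  letI : NormedAlgebra ℂ (Matrix (Fin n) (Fin n) ℂ) := Matrix.linftyOpNormedAlgebra
  let T : Matrix (Fin n) (Fin n) ℂ →ₗ[ℂ] (Fin n → ℂ) :=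
    { toFun := fun M => M.mulVec v
      map_add' := fun M N => Matrix.add_mulVec M N v
      map_smul' := fun c M => Matrix.smul_mulVec c M v }
  have hT : Continuous T := T.continuous_of_finiteDimensional
  have hA : Summable fun k : ℕ => ((k.factorial : ℂ)⁻¹) • A ^ k :=
    NormedSpace.expSeries_summable' (𝕂 := ℂ) A
  have hB : Summable fun k : ℕ => ((k.factorial : ℂ)⁻¹) • B ^ k :=
    NormedSpace.expSeries_summable' (𝕂 := ℂ) B
  have eA : (NormedSpace.exp A).mulVec v
      = ∑' k : ℕ, ((k.factorial : ℂ)⁻¹) • (A ^ k).mulVec v := by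
    rw [NormedSpace.exp_eq_tsum ℂ]
    simpa [T, Matrix.smul_mulVec] using (hA.hasSum.map T hT).tsum_eq.symm
  have eB : (NormedSpace.exp B).mulVec v
      = ∑' k : ℕ, ((k.factorial : ℂ)⁻¹) • (B ^ k).mulVec v := by
    rw [NormedSpace.exp_eq_tsum ℂ]
    simpa [T, Matrix.smul_mulVec] using (hB.hasSum.map T hT).tsum_eq.symm
  rw [eA, eB]
  exact tsum_congr fun k => by rw [h k]

theorem pair_lpst_preserved_under_twin_perturbation_case_c
    {n : ℕ} (G : SimpleGraph (Fin n)) [DecidableRel G.Adj]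
    (a b p q : Fin n) (hab : a ≠ b)
    (hpa : p ≠ a) (hpb : p ≠ b) (hqa : q ≠ a) (hqb : q ≠ b)
    (htwin : ∀ v : Fin n, v ≠ a → v ≠ b → (G.Adj a v ↔ G.Adj b v)) (α : ℝ) :
    (∀ t : ℝ,
      (NormedSpace.exp ((-(Complex.I * (t : ℂ))) •
          (G.lapMatrix ℂ + (α : ℂ) •
            vecMulVec ((Pi.single a 1 : Fin n → ℂ) - Pi.single b 1)
              ((Pi.single a 1 : Fin n → ℂ) - Pi.single b 1)))).mulVec
          ((Pi.single p 1 : Fin n → ℂ) - Pi.single q 1)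
        = (NormedSpace.exp ((-(Complex.I * (t : ℂ))) • G.lapMatrix ℂ)).mulVec
            ((Pi.single p 1 : Fin n → ℂ) - Pi.single q 1))
    ∧ ∀ (τ : ℝ) (c d : Fin n) (γ : ℂ), ‖γ‖ = 1 →
        (NormedSpace.exp ((-(Complex.I * (τ : ℂ))) • G.lapMatrix ℂ)).mulVec
            ((Pi.single p 1 : Fin n → ℂ) - Pi.single q 1)
          = γ • ((Pi.single c 1 : Fin n → ℂ) - Pi.single d 1) →
        (NormedSpace.exp ((-(Complex.I * (τ : ℂ))) •
            (G.lapMatrix ℂ + (α : ℂ) •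
              vecMulVec ((Pi.single a 1 : Fin n → ℂ) - Pi.single b 1)
                ((Pi.single a 1 : Fin n → ℂ) - Pi.single b 1)))).mulVec
            ((Pi.single p 1 : Fin n → ℂ) - Pi.single q 1)
          = γ • ((Pi.single c 1 : Fin n → ℂ) - Pi.single d 1) := by
  set w : Fin n → ℂ := (Pi.single a 1 : Fin n → ℂ) - Pi.single b 1 with hw
  set v : Fin n → ℂ := (Pi.single p 1 : Fin n → ℂ) - Pi.single q 1 with hv
  set L : Matrix (Fin n) (Fin n) ℂ := G.lapMatrix ℂ with hL
  set M : Matrix (Fin n) (Fin n) ℂ := vecMulVec w w with hM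
  -- swap trick
  have hswap : ∀ x : Fin n → ℂ, x a = x b →
      ∑ u, (G.adjMatrix ℂ) a u * x u = ∑ u, (G.adjMatrix ℂ) b u * x u := by
    intro x hx
    rw [← Equiv.sum_comp (Equiv.swap a b) (fun u => (G.adjMatrix ℂ) b u * x u)]
    refine Finset.sum_congr rfl fun u _ => ?_
    by_cases hua : u = a
    · subst hua
      simp [Equiv.swap_apply_left]
    by_cases hub : u = b
    · rw [hub, Equiv.swap_apply_right, ← hx]
      simp only [SimpleGraph.adjMatrix_apply, G.adj_comm a b]
    · rw [Equiv.swap_apply_of_ne_of_ne hua hub]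
      simp only [SimpleGraph.adjMatrix_apply, htwin u hua hub]
  have hdeg : (G.degree a : ℂ) = (G.degree b : ℂ) := by
    have h := hswap (fun _ => 1) rfl
    simp only [mul_one] at h
    have ha : ∑ u, (G.adjMatrix ℂ) a u = (G.degree a : ℂ) := by simp [SimpleGraph.degree, SimpleGraph.neighborFinset_eq_filter]
    have hb : ∑ u, (G.adjMatrix ℂ) b u = (G.degree b : ℂ) := by simp [SimpleGraph.degree, SimpleGraph.neighborFinset_eq_filter]
    rw [← ha, ← hb, h]
  -- w ⬝ x = 0 for x with equal a,b coordinates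
  have hMzero : ∀ x : Fin n → ℂ, x a = x b → M.mulVec x = 0 := by
    intro x hx
    funext i
    simp only [hM, Matrix.mulVec, dotProduct, Matrix.vecMulVec_apply,
      Pi.zero_apply]
    have : ∀ j, w i * w j * x j = w i * (w j * x j) := fun j => mul_assoc _ _ _
    simp only [this, ← Finset.mul_sum]
    have hsum : ∑ j, w j * x j = 0 := by
      simp [hw, Pi.sub_apply, sub_mul, Finset.sum_sub_distrib, Pi.single_apply,
        Finset.sum_ite_eq', hx]
    rw [hsum, mul_zero]
  -- L preserves the subspace {x | x a = x b}
  have hLpres : ∀ x : Fin n → ℂ, x a = x b → (L.mulVec x) a = (L.mulVec x) b := by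
    intro x hx
    have hxa : (G.adjMatrix ℂ).mulVec x a = (G.adjMatrix ℂ).mulVec x b := by
      simpa [Matrix.mulVec, dotProduct] using hswap x hx
    simp only [hL, SimpleGraph.lapMatrix, Matrix.sub_mulVec, Pi.sub_apply,
      SimpleGraph.degMatrix, Matrix.mulVec_diagonal, hxa, hdeg, hx]
  -- one step
  have hstep : ∀ (c : ℂ) (x : Fin n → ℂ), x a = x b →
      ((c • (L + (α : ℂ) • M)).mulVec x = (c • L).mulVec x) ∧
        (((c • L).mulVec x) a = ((c • L).mulVec x) b) := by
    intro c x hx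
    constructor
    · rw [Matrix.smul_mulVec, Matrix.smul_mulVec, Matrix.add_mulVec,
        Matrix.smul_mulVec, hMzero x hx]
      simp
    · simp only [Matrix.smul_mulVec, Pi.smul_apply, smul_eq_mul]
      rw [hLpres x hx]
  have hv0 : v a = v b := by
    simp [hv, Pi.sub_apply, Pi.single_eq_of_ne (Ne.symm hpa),
      Pi.single_eq_of_ne (Ne.symm hpb), Pi.single_eq_of_ne (Ne.symm hqa),
      Pi.single_eq_of_ne (Ne.symm hqb)]
  -- powers
  have hk : ∀ (c : ℂ) (k : ℕ),
      ((c • (L + (α : ℂ) • M)) ^ k).mulVec v = ((c • L) ^ k).mulVec v ∧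
        ((((c • L) ^ k).mulVec v) a = (((c • L) ^ k).mulVec v) b) := by
    intro c k
    induction k with
    | zero => simpa [Matrix.one_mulVec] using hv0
    | succ k ih =>
        rw [pow_succ', pow_succ', ← Matrix.mulVec_mulVec, ← Matrix.mulVec_mulVec,
          ih.1]
        exact hstep c _ ih.2
  have key : ∀ t : ℝ,
      (NormedSpace.exp ((-(Complex.I * (t : ℂ))) •
          (L + (α : ℂ) • M))).mulVec v
        = (NormedSpace.exp ((-(Complex.I * (t : ℂ))) • L)).mulVec v := by
    intro t
    exact exp_mulVec_congr _ _ v fun k => (hk (-(Complex.I * (t : ℂ))) k).1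
  refine ⟨key, fun τ c d γ hγ heq => ?_⟩
  rw [key τ]
  exact heq
end

section
/- Let G be a graph with Laplacian L, a, b twin vertices, M = (e_a - e_b)(e_a - e_b)^T, α ∈ ℝ, and q an index distinct from a and b. Suppose e_a - e_q is periodic at time τ in G, i.e., exp(-iτL)(e_a - e_q) = γ(e_a - e_q) with |γ| = 1, and suppose 2ατ ∈ π(2ℤ+1) (an odd multiple of π). Then the perturbed graph with Laplacian L + αM has Pair-LPST at time τ from e_a - e_q to e_b - e_q: exp(-iτ(L + αM))(e_b - e_q) = γ'(e_a - e_q) for some unimodular γ'. -/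
open Matrix Complex

private theorem exp_mulVec_eigvec {n : ℕ} (A : Matrix (Fin n) (Fin n) ℂ)
    (u : Fin n → ℂ) (μ : ℂ) (h : A.mulVec u = μ • u) :
    (NormedSpace.exp A).mulVec u = Complex.exp μ • u := by
  letI : SeminormedRing (Matrix (Fin n) (Fin n) ℂ) := Matrix.linftyOpSemiNormedRing
  letI : NormedRing (Matrix (Fin n) (Fin n) ℂ) := Matrix.linftyOpNormedRing
  letI : NormedAlgebra ℂ (Matrix (Fin n) (Fin n) ℂ) := Matrix.linftyOpNormedAlgebra
  have hpow : ∀ m : ℕ, (A ^ m).mulVec u = μ ^ m • u := by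
    intro m
    induction m with
    | zero => simp
    | succ m ih =>
      rw [pow_succ, ← Matrix.mulVec_mulVec, h, Matrix.mulVec_smul, ih, smul_smul, ← pow_succ']
  let f : Matrix (Fin n) (Fin n) ℂ →ₗ[ℂ] (Fin n → ℂ) :=
    { toFun := fun B => B.mulVec u
      map_add' := fun B C => Matrix.add_mulVec B C u
      map_smul' := fun c B => Matrix.smul_mulVec c B u }
  have hsum : Summable fun m : ℕ => ((Nat.factorial m : ℂ))⁻¹ • A ^ m :=
    NormedSpace.expSeries_summable' (𝕂 := ℂ) A
  have key : (NormedSpace.exp A).mulVec u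
      = ∑' m : ℕ, (((Nat.factorial m : ℂ))⁻¹ • A ^ m).mulVec u := by
    rw [NormedSpace.exp_eq_tsum ℂ]
    exact (f.toContinuousLinearMap).map_tsum hsum
  rw [key]
  have : ∀ m : ℕ, (((Nat.factorial m : ℂ))⁻¹ • A ^ m).mulVec u
      = (((Nat.factorial m : ℂ))⁻¹ * μ ^ m) • u := by
    intro m
    rw [Matrix.smul_mulVec, hpow, smul_smul]
  simp_rw [this]
  rw [Summable.tsum_smul_const]
  · congr 1
    rw [Complex.exp_eq_exp_ℂ, NormedSpace.exp_eq_tsum ℂ]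
    simp [smul_eq_mul]
  · simpa [smul_eq_mul] using NormedSpace.expSeries_summable' (𝕂 := ℂ) μ

theorem pair_lpst_from_periodicity_twin_perturbation
    {n : ℕ} (G : SimpleGraph (Fin n)) [DecidableRel G.Adj]
    (a b q : Fin n) (hab : a ≠ b) (hqa : q ≠ a) (hqb : q ≠ b)
    (htwin : ∀ v : Fin n, v ≠ a → v ≠ b → (G.Adj a v ↔ G.Adj b v))
    (α τ : ℝ) (hατ : ∃ k : ℤ, 2 * α * τ = (2 * k + 1) * Real.pi)
    (γ : ℂ) (hγ : ‖γ‖ = 1)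
    (hper : (NormedSpace.exp ((-(Complex.I * (τ : ℂ))) • G.lapMatrix ℂ)).mulVec
        ((Pi.single a 1 : Fin n → ℂ) - Pi.single q 1)
      = γ • ((Pi.single a 1 : Fin n → ℂ) - Pi.single q 1)) :
    ∃ γ' : ℂ, ‖γ'‖ = 1 ∧
      (NormedSpace.exp ((-(Complex.I * (τ : ℂ))) •
          (G.lapMatrix ℂ + (α : ℂ) •
            vecMulVec ((Pi.single a 1 : Fin n → ℂ) - Pi.single b 1)
              ((Pi.single a 1 : Fin n → ℂ) - Pi.single b 1)))).mulVec
          ((Pi.single b 1 : Fin n → ℂ) - Pi.single q 1)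
        = γ' • ((Pi.single a 1 : Fin n → ℂ) - Pi.single q 1) := by
  classical
  set w : Fin n → ℂ := (Pi.single a 1 : Fin n → ℂ) - Pi.single b 1 with hw
  set v : Fin n → ℂ := (Pi.single b 1 : Fin n → ℂ) - Pi.single q 1 with hv
  set L : Matrix (Fin n) (Fin n) ℂ := G.lapMatrix ℂ with hL
  set M : Matrix (Fin n) (Fin n) ℂ := vecMulVec w w with hM
  -- component values of w
  have hwa : w a = 1 := by simp [hw, Pi.single_apply, hab, hab.symm]
  have hwb : w b = -1 := by simp [hw, Pi.single_apply, hab, hab.symm]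
  have hwother : ∀ c, c ≠ a → c ≠ b → w c = 0 := by
    intro c h1 h2; simp [hw, Pi.single_apply, h1, h2]
  -- degrees of twins agree
  have hAdjswap : ∀ u, G.Adj b u ↔ G.Adj a (Equiv.swap a b u) := by
    intro u
    rcases eq_or_ne u a with rfl | hua
    · rw [Equiv.swap_apply_left]; exact G.adj_comm b u
    rcases eq_or_ne u b with rfl | hub
    · rw [Equiv.swap_apply_right]; simp
    · rw [Equiv.swap_apply_of_ne_of_ne hua hub]; exact (htwin u hua hub).symm
  have hdeg : G.degree b = G.degree a := by
    rw [SimpleGraph.degree, SimpleGraph.degree]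
    rw [show G.neighborFinset b = (G.neighborFinset a).map (Equiv.swap a b).toEmbedding by
      ext u
      rw [Finset.mem_map_equiv, Equiv.symm_swap, SimpleGraph.mem_neighborFinset,
        SimpleGraph.mem_neighborFinset]
      exact hAdjswap u]
    rw [Finset.card_map]
  -- w is an eigenvector of L
  set μ : ℂ := (G.degree a : ℂ) + (if G.Adj a b then 1 else 0) with hμ
  have hsumN : ∀ c, ∑ u ∈ G.neighborFinset c, w u
      = (if G.Adj c a then (1:ℂ) else 0) - (if G.Adj c b then 1 else 0) := by
    intro c
    simp [hw, Pi.sub_apply, Finset.sum_sub_distrib, Pi.single_apply,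
      Finset.sum_ite_eq', SimpleGraph.mem_neighborFinset]
  have hLw : L *ᵥ w = μ • w := by
    funext c
    rw [hL, SimpleGraph.lapMatrix_mulVec_apply, hsumN]
    rcases eq_or_ne c a with hca | hca
    · rw [hca]
      simp only [hwa, Pi.smul_apply, smul_eq_mul, hμ]
      by_cases hadj : G.Adj a b <;> simp [hadj, G.loopless] <;> ring
    rcases eq_or_ne c b with hcb | hcb
    · rw [hcb]
      have h2 : (G.degree b : ℂ) = (G.degree a : ℂ) := by exact_mod_cast hdeg
      have h3 : ¬ G.Adj b b := G.loopless.irrefl b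
      have h4 : G.Adj b a ↔ G.Adj a b := G.adj_comm b a
      simp only [hwb, Pi.smul_apply, smul_eq_mul, hμ, h2, h4, if_neg h3]
      by_cases hadj : G.Adj a b <;> simp [hadj] <;> ring
    · have h1 : G.Adj c a ↔ G.Adj c b := by
        rw [G.adj_comm c a, G.adj_comm c b]; exact htwin c hca hcb
      simp [hwother c hca hcb, h1]
  -- M acts as projection onto w
  have hMvec : ∀ x : Fin n → ℂ, M *ᵥ x = (w ⬝ᵥ x) • w := by
    intro x
    funext i
    simp only [hM, Matrix.mulVec, dotProduct, vecMulVec_apply, Pi.smul_apply, smul_eq_mul,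
      Finset.sum_mul]
    exact Finset.sum_congr rfl fun j _ => by ring
  have hww : w ⬝ᵥ w = 2 := by
    rw [hw, sub_dotProduct, single_dotProduct, single_dotProduct,
      ← hw, hwa, hwb]
    ring
  have hwv : w ⬝ᵥ v = -1 := by
    have hva : v a = 0 := by simp [hv, Pi.single_apply, hab, (Ne.symm hqa)]
    have hvb : v b = 1 := by simp [hv, Pi.single_apply, hab.symm, (Ne.symm hqb)]
    rw [hw, sub_dotProduct, single_dotProduct, single_dotProduct,
      hva, hvb]
    ring
  -- L and M commute
  have hrow : ∀ i, ∑ k, L i k * w k = μ * w i := by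
    intro i
    have := congrFun hLw i
    simpa [Matrix.mulVec, dotProduct] using this
  have hLM : L * M = μ • M := by
    ext i j
    simp only [Matrix.mul_apply, hM, vecMulVec_apply, Matrix.smul_apply, smul_eq_mul]
    calc ∑ k, L i k * (w k * w j) = (∑ k, L i k * w k) * w j := by
          rw [Finset.sum_mul]; exact Finset.sum_congr rfl fun k _ => by ring
      _ = μ * (w i * w j) := by rw [hrow]; ring
  have hML : M * L = μ • M := by
    ext i j
    simp only [Matrix.mul_apply, hM, vecMulVec_apply, Matrix.smul_apply, smul_eq_mul]
    have hsym0 : (G.lapMatrix ℂ).IsSymm := G.isSymm_lapMatrix ℂ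
    have hsym : ∀ k, L k j = L j k := fun k => by rw [hL]; exact hsym0.apply j k
    calc ∑ k, w i * w k * L k j = w i * ∑ k, L j k * w k := by
          rw [Finset.mul_sum]
          exact Finset.sum_congr rfl fun k _ => by rw [hsym k]; ring
      _ = μ * (w i * w j) := by rw [hrow]; ring
  have hC : Commute L M := hLM.trans hML.symm
  set c : ℂ := -(Complex.I * (τ : ℂ)) with hc
  have hcomm : Commute (c • L) ((c * (α : ℂ)) • M) := (hC.smul_left c).smul_right _
  have hsplit : c • (L + (α : ℂ) • M) = c • L + (c * (α : ℂ)) • M := by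
    rw [smul_add, smul_smul]
  set B : Matrix (Fin n) (Fin n) ℂ := (c * (α : ℂ)) • M with hB
  -- exp B maps v to e_a - e_q
  set u0 : Fin n → ℂ := v + (2⁻¹ : ℂ) • w with hu0
  have hBu0 : B *ᵥ u0 = (0 : ℂ) • u0 := by
    rw [hB, Matrix.smul_mulVec, hMvec]
    have : w ⬝ᵥ u0 = 0 := by
      rw [hu0, dotProduct_add, dotProduct_smul, hwv, hww]
      norm_num
    rw [this]
    simp
  have hBw : B *ᵥ w = (c * (α : ℂ) * 2) • w := by
    rw [hB, Matrix.smul_mulVec, hMvec, hww, smul_smul]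
  have e1 : (NormedSpace.exp B) *ᵥ u0 = u0 := by
    have := exp_mulVec_eigvec B u0 0 hBu0
    simpa using this
  have e2 : (NormedSpace.exp B) *ᵥ w = Complex.exp (c * (α : ℂ) * 2) • w :=
    exp_mulVec_eigvec B w _ hBw
  have hexpval : Complex.exp (c * (α : ℂ) * 2) = -1 := by
    obtain ⟨k, hk⟩ := hατ
    have h1 : c * (α : ℂ) * 2 = ((-(2 * k + 1) : ℤ) : ℂ) * ((Real.pi : ℂ) * Complex.I) := by
      rw [hc]
      have : ((2 * α * τ : ℝ) : ℂ) = (((2 * k + 1) * Real.pi : ℝ) : ℂ) := congrArg Complex.ofReal hk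
      push_cast at this ⊢
      linear_combination (-Complex.I) * this
    rw [h1, Complex.exp_int_mul, Complex.exp_pi_mul_I]
    exact Odd.neg_one_zpow ⟨-(k + 1), by ring⟩
  have hexpBv : (NormedSpace.exp B) *ᵥ v = (Pi.single a 1 : Fin n → ℂ) - Pi.single q 1 := by
    have hdecomp : v = u0 + (-(2⁻¹ : ℂ)) • w := by
      rw [hu0]; module
    rw [hdecomp, Matrix.mulVec_add, Matrix.mulVec_smul, e1, e2, hexpval]
    rw [hu0, hw, hv]
    module
  refine ⟨γ, hγ, ?_⟩
  rw [hsplit, Matrix.exp_add_of_commute _ _ hcomm,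
    ← Matrix.mulVec_mulVec, hexpBv]
  exact hper
end

section
/- Let G be a graph with Laplacian L, a, b twin vertices, M = (e_a - e_b)(e_a - e_b)^T, α ∈ ℝ. If e_p - e_q with p, q both distinct from a and b is periodic at time τ in G, then it is periodic at time τ in the perturbed graph with Laplacian L + αM. -/
open Matrix Complex Finset

attribute [local instance] Matrix.linftyOpNormedRing Matrix.linftyOpNormedAlgebra

lemma exp_mulVec_eq_self {n : ℕ} (B : Matrix (Fin n) (Fin n) ℂ) (v : Fin n → ℂ)
    (h : B *ᵥ v = 0) : (NormedSpace.exp B) *ᵥ v = v := by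
  let f : Matrix (Fin n) (Fin n) ℂ →ₗ[ℂ] (Fin n → ℂ) :=
    { toFun := fun X => X *ᵥ v
      map_add' := fun X Y => Matrix.add_mulVec X Y v
      map_smul' := fun c X => Matrix.smul_mulVec c X v }
  have hsum : Summable (fun k : ℕ => ((k.factorial : ℂ))⁻¹ • B ^ k) :=
    NormedSpace.expSeries_summable' B
  have hmap := (f.toContinuousLinearMap).map_tsum hsum
  rw [NormedSpace.exp_eq_tsum ℂ]
  show f (∑' k : ℕ, ((k.factorial : ℂ))⁻¹ • B ^ k) = v
  rw [show f (∑' k : ℕ, ((k.factorial : ℂ))⁻¹ • B ^ k)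
      = ∑' k : ℕ, f (((k.factorial : ℂ))⁻¹ • B ^ k) from hmap]
  have hterm : ∀ k : ℕ, k ≠ 0 → f (((k.factorial : ℂ))⁻¹ • B ^ k) = 0 := by
    intro k hk
    obtain ⟨m, rfl⟩ := Nat.exists_eq_succ_of_ne_zero hk
    have hz : (B ^ (m + 1)) *ᵥ v = 0 := by
      rw [pow_succ, ← Matrix.mulVec_mulVec, h, Matrix.mulVec_zero]
    simp only [f, LinearMap.coe_mk, AddHom.coe_mk, Matrix.smul_mulVec, hz, smul_zero]
  rw [tsum_eq_single 0 hterm]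
  simp [f, Matrix.one_mulVec]

theorem periodicity_preserved_away_from_twins
    {n : ℕ} (G : SimpleGraph (Fin n)) [DecidableRel G.Adj]
    (a b p q : Fin n) (hab : a ≠ b)
    (hpa : p ≠ a) (hpb : p ≠ b) (hqa : q ≠ a) (hqb : q ≠ b)
    (htwin : ∀ v : Fin n, v ≠ a → v ≠ b → (G.Adj a v ↔ G.Adj b v))
    (α τ : ℝ) (γ : ℂ) (hγ : ‖γ‖ = 1)
    (hper : (NormedSpace.exp ((-(Complex.I * (τ : ℂ))) • G.lapMatrix ℂ)).mulVec
        ((Pi.single p 1 : Fin n → ℂ) - Pi.single q 1)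
      = γ • ((Pi.single p 1 : Fin n → ℂ) - Pi.single q 1)) :
    ∃ γ' : ℂ, ‖γ'‖ = 1 ∧
      (NormedSpace.exp ((-(Complex.I * (τ : ℂ))) •
          (G.lapMatrix ℂ + (α : ℂ) •
            vecMulVec ((Pi.single a 1 : Fin n → ℂ) - Pi.single b 1)
              ((Pi.single a 1 : Fin n → ℂ) - Pi.single b 1)))).mulVec
          ((Pi.single p 1 : Fin n → ℂ) - Pi.single q 1)
        = γ' • ((Pi.single p 1 : Fin n → ℂ) - Pi.single q 1) := by
  set w : Fin n → ℂ := (Pi.single a 1 : Fin n → ℂ) - Pi.single b 1 with hw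
  set v : Fin n → ℂ := (Pi.single p 1 : Fin n → ℂ) - Pi.single q 1 with hv
  have hwval : ∀ j, w j = (if j = a then 1 else 0) - (if j = b then 1 else 0) := by
    intro j; simp [hw, Pi.single_apply]
  have hvval : ∀ j, v j = (if j = p then 1 else 0) - (if j = q then 1 else 0) := by
    intro j; simp [hv, Pi.single_apply]
  -- degree equality
  have hdeg : G.degree a = G.degree b := by
    have h1 : ∀ c : Fin n, G.degree c = ∑ x : Fin n, if G.Adj c x then 1 else 0 := by
      intro c
      rw [SimpleGraph.degree, SimpleGraph.neighborFinset_eq_filter, Finset.card_filter]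
    rw [h1 a, h1 b]
    refine Fintype.sum_equiv (Equiv.swap a b) _ _ ?_
    intro x
    rcases eq_or_ne x a with rfl | hxa
    · simp [Equiv.swap_apply_left, G.irrefl]
    rcases eq_or_ne x b with rfl | hxb
    · simp only [Equiv.swap_apply_right]
      simp [G.adj_comm]
    · rw [Equiv.swap_apply_of_ne_of_ne hxa hxb]
      simp [htwin x hxa hxb]
  -- eigenvector
  set lam : ℂ := (G.degree a : ℂ) + (if G.Adj a b then 1 else 0) with hlam
  have hLw : G.lapMatrix ℂ *ᵥ w = lam • w := by
    funext i
    rw [SimpleGraph.lapMatrix_mulVec_apply]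
    have hsum : ∑ u ∈ G.neighborFinset i, w u
        = (if G.Adj i a then 1 else 0) - (if G.Adj i b then 1 else 0) := by
      simp_rw [hwval]
      rw [Finset.sum_sub_distrib, Finset.sum_ite_eq' (G.neighborFinset i) a (fun _ => (1:ℂ)),
        Finset.sum_ite_eq' (G.neighborFinset i) b (fun _ => (1:ℂ))]
      simp [SimpleGraph.mem_neighborFinset]
    rw [hsum]
    rcases eq_or_ne i a with rfl | hia
    · have hwa : w i = 1 := by rw [hwval]; simp [hab]
      simp only [Pi.smul_apply, smul_eq_mul, hwa, mul_one, hlam]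
      rw [if_neg (G.irrefl)]
      ring
    rcases eq_or_ne i b with rfl | hib
    · have hwi : w i = -1 := by rw [hwval]; simp [Ne.symm hab]
      have hdc : (G.degree i : ℂ) = (G.degree a : ℂ) := by exact_mod_cast hdeg.symm
      simp only [Pi.smul_apply, smul_eq_mul, hwi, hdc, hlam]
      rw [if_neg (G.irrefl)]
      by_cases hadj : G.Adj a i
      · rw [if_pos ((G.adj_comm i a).mpr hadj), if_pos hadj]; ring
      · rw [if_neg (fun h => hadj ((G.adj_comm i a).mp h)), if_neg hadj]; ring
    · have hwi : w i = 0 := by rw [hwval]; simp [hia, hib]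
      have h1 : G.Adj i a ↔ G.Adj i b := by
        rw [G.adj_comm i a, G.adj_comm i b]; exact htwin i hia hib
      simp only [Pi.smul_apply, smul_eq_mul, hwi, mul_zero]
      by_cases h : G.Adj i a
      · rw [if_pos h, if_pos (h1.mp h)]; ring
      · rw [if_neg h, if_neg (fun hh => h (h1.mpr hh))]; ring
  -- symmetry
  have hsymm : ∀ k j, G.lapMatrix ℂ k j = G.lapMatrix ℂ j k := fun k j =>
    Matrix.IsSymm.apply (G.isSymm_lapMatrix ℂ) j k
  have hLwvec : ∀ i, ∑ k, G.lapMatrix ℂ i k * w k = lam * w i := by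
    intro i
    have := congrFun hLw i
    simpa [Matrix.mulVec, dotProduct] using this
  have hcommLM : Commute (G.lapMatrix ℂ) (vecMulVec w w) := by
    show _ = _
    ext i j
    rw [Matrix.mul_apply, Matrix.mul_apply]
    simp only [Matrix.vecMulVec_apply]
    calc ∑ k, G.lapMatrix ℂ i k * (w k * w j)
        = (∑ k, G.lapMatrix ℂ i k * w k) * w j := by
          rw [Finset.sum_mul]; congr 1; funext k; ring
      _ = lam * w i * w j := by rw [hLwvec i]
      _ = w i * (lam * w j) := by ring
      _ = w i * (∑ k, G.lapMatrix ℂ j k * w k) := by rw [hLwvec j]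
      _ = ∑ k, w i * w k * G.lapMatrix ℂ k j := by
          rw [Finset.mul_sum]; congr 1; funext k; rw [hsymm k j]; ring
  have hcomm : Commute ((-(Complex.I * (τ : ℂ))) • G.lapMatrix ℂ)
      ((-(Complex.I * (τ : ℂ))) • ((α : ℂ) • vecMulVec w w)) :=
    ((hcommLM.smul_right ((α : ℂ))).smul_right _).smul_left _
  -- M kills v
  have hMv : (vecMulVec w w) *ᵥ v = 0 := by
    funext i
    simp only [Matrix.mulVec, dotProduct, Matrix.vecMulVec_apply, Pi.zero_apply]
    apply Finset.sum_eq_zero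
    intro j _
    have hz : w j * v j = 0 := by
      by_cases hja : j = a
      · have hvz : v j = 0 := by
          rw [hvval, hja, if_neg (Ne.symm hpa), if_neg (Ne.symm hqa)]; ring
        rw [hvz, mul_zero]
      · by_cases hjb : j = b
        · have hvz : v j = 0 := by
            rw [hvval, hjb, if_neg (Ne.symm hpb), if_neg (Ne.symm hqb)]; ring
          rw [hvz, mul_zero]
        · have hwz : w j = 0 := by rw [hwval, if_neg hja, if_neg hjb]; ring
          rw [hwz, zero_mul]
    calc w i * w j * v j = w i * (w j * v j) := by ring
      _ = 0 := by rw [hz, mul_zero]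
  refine ⟨γ, hγ, ?_⟩
  have hsplit : (-(Complex.I * (τ : ℂ))) • (G.lapMatrix ℂ + (α : ℂ) • vecMulVec w w)
      = (-(Complex.I * (τ : ℂ))) • G.lapMatrix ℂ
        + (-(Complex.I * (τ : ℂ))) • ((α : ℂ) • vecMulVec w w) := smul_add _ _ _
  have hBv : ((-(Complex.I * (τ : ℂ))) • ((α : ℂ) • vecMulVec w w)) *ᵥ v = 0 := by
    rw [Matrix.smul_mulVec, Matrix.smul_mulVec, hMv, smul_zero, smul_zero]
  have e1 : (NormedSpace.exp ((-(Complex.I * (τ : ℂ))) •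
        (G.lapMatrix ℂ + (α : ℂ) • vecMulVec w w))) *ᵥ v
      = NormedSpace.exp ((-(Complex.I * (τ : ℂ))) • G.lapMatrix ℂ) *ᵥ
        (NormedSpace.exp ((-(Complex.I * (τ : ℂ))) • ((α : ℂ) • vecMulVec w w)) *ᵥ v) := by
    rw [hsplit, Matrix.mulVec_mulVec]
    exact congrArg (fun M => M *ᵥ v) (Matrix.exp_add_of_commute _ _ hcomm)
  have e2 : NormedSpace.exp ((-(Complex.I * (τ : ℂ))) • ((α : ℂ) • vecMulVec w w)) *ᵥ v = v :=
    exp_mulVec_eq_self _ _ hBv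
  show (NormedSpace.exp ((-(Complex.I * (τ : ℂ))) •
        (G.lapMatrix ℂ + (α : ℂ) • vecMulVec w w))) *ᵥ v = γ • v
  rw [e1, e2, hper]
end

section
/- Let G be a graph with Laplacian L, a, b twin vertices, M = (e_a - e_b)(e_a - e_b)^T, α ∈ ℝ. If G has Laplacian pretty good pair state transfer from e_p - e_q to e_c - e_d with p, q, c, d all distinct from a and b (i.e., for every ε > 0 there is τ with |(1/2)(e_p - e_q)^T exp(-iτL)(e_c - e_d)|² ≥ 1 - ε), then the perturbed graph with Laplacian L + αM also has Laplacian pretty good pair state transfer from e_p - e_q to e_c - e_d. -/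
open Matrix Complex

section Aux

lemma exp_mulVec_of_mulVec_eq_zero {n : ℕ} (M : Matrix (Fin n) (Fin n) ℂ)
    (v : Fin n → ℂ) (h : M *ᵥ v = 0) : (NormedSpace.exp M) *ᵥ v = v := by
  letI : SeminormedRing (Matrix (Fin n) (Fin n) ℂ) := Matrix.linftyOpSemiNormedRing
  letI : NormedRing (Matrix (Fin n) (Fin n) ℂ) := Matrix.linftyOpNormedRing
  letI : NormedAlgebra ℂ (Matrix (Fin n) (Fin n) ℂ) := Matrix.linftyOpNormedAlgebra
  have hpow : ∀ k : ℕ, (M ^ (k + 1)) *ᵥ v = 0 := by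
    intro k
    induction k with
    | zero => simpa using h
    | succ k ih =>
      rw [pow_succ']
      rw [← Matrix.mulVec_mulVec, ih, Matrix.mulVec_zero]
  have hs : Summable (fun k : ℕ => (k.factorial⁻¹ : ℂ) • M ^ k) :=
    NormedSpace.expSeries_summable' M
  let f : Matrix (Fin n) (Fin n) ℂ →ₗ[ℂ] (Fin n → ℂ) :=
    { toFun := fun A => A *ᵥ v
      map_add' := fun A B => Matrix.add_mulVec A B v
      map_smul' := fun r A => Matrix.smul_mulVec r A v }
  have hf : Continuous f := f.continuous_of_finiteDimensional
  have key : (NormedSpace.exp M) *ᵥ v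
      = ∑' k : ℕ, ((k.factorial⁻¹ : ℂ) • M ^ k) *ᵥ v := by
    rw [NormedSpace.exp_eq_tsum (𝕂 := ℂ)]
    exact (f.toContinuousLinearMap.map_tsum hs :)
  rw [key, tsum_eq_single 0]
  · simp
  · intro k hk
    obtain ⟨k', rfl⟩ : ∃ k', k = k' + 1 := ⟨k - 1, by omega⟩
    rw [Matrix.smul_mulVec, hpow, smul_zero]

end Aux

theorem pair_lpgst_preserved_under_twin_perturbation
    {n : ℕ} (G : SimpleGraph (Fin n)) [DecidableRel G.Adj]
    (a b p q c d : Fin n) (hab : a ≠ b)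
    (hpa : p ≠ a) (hpb : p ≠ b) (hqa : q ≠ a) (hqb : q ≠ b)
    (hca : c ≠ a) (hcb : c ≠ b) (hda : d ≠ a) (hdb : d ≠ b)
    (htwin : ∀ v : Fin n, v ≠ a → v ≠ b → (G.Adj a v ↔ G.Adj b v)) (α : ℝ)
    (hlpgst : ∀ ε : ℝ, 0 < ε → ∃ τ : ℝ,
      ‖((1 / 2 : ℂ) *
          dotProduct ((Pi.single p 1 : Fin n → ℂ) - Pi.single q 1)
            ((NormedSpace.exp ((-(Complex.I * (τ : ℂ))) • G.lapMatrix ℂ)).mulVec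
              ((Pi.single c 1 : Fin n → ℂ) - Pi.single d 1)))‖ ^ 2
        ≥ 1 - ε) :
    ∀ ε : ℝ, 0 < ε → ∃ τ : ℝ,
      ‖((1 / 2 : ℂ) *
          dotProduct ((Pi.single p 1 : Fin n → ℂ) - Pi.single q 1)
            ((NormedSpace.exp ((-(Complex.I * (τ : ℂ))) •
                (G.lapMatrix ℂ + (α : ℂ) •
                  vecMulVec ((Pi.single a 1 : Fin n → ℂ) - Pi.single b 1)
                    ((Pi.single a 1 : Fin n → ℂ) - Pi.single b 1)))).mulVec
              ((Pi.single c 1 : Fin n → ℂ) - Pi.single d 1)))‖ ^ 2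
        ≥ 1 - ε := by
  classical
  set u : Fin n → ℂ := (Pi.single a 1 : Fin n → ℂ) - Pi.single b 1 with hu
  set v : Fin n → ℂ := (Pi.single c 1 : Fin n → ℂ) - Pi.single d 1 with hv
  set L : Matrix (Fin n) (Fin n) ℂ := G.lapMatrix ℂ with hL
  set M : Matrix (Fin n) (Fin n) ℂ := vecMulVec u u with hM
  -- twin vertices have the same degree
  have hdeg : G.degree a = G.degree b := by
    have himg : G.neighborFinset b = (G.neighborFinset a).image (Equiv.swap a b) := by
      ext w
      simp only [Finset.mem_image, SimpleGraph.mem_neighborFinset]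
      constructor
      · intro hw
        refine ⟨Equiv.swap a b w, ?_, by simp⟩
        rcases eq_or_ne w a with rfl | hwa
        · simpa [Equiv.swap_apply_left] using hw.symm
        rcases eq_or_ne w b with rfl | hwb
        · simp at hw
        · rw [Equiv.swap_apply_of_ne_of_ne hwa hwb]
          exact (htwin w hwa hwb).mpr hw
      · rintro ⟨x, hx, rfl⟩
        rcases eq_or_ne x a with rfl | hxa
        · simp at hx
        rcases eq_or_ne x b with rfl | hxb
        · simpa [Equiv.swap_apply_right] using hx.symm
        · rw [Equiv.swap_apply_of_ne_of_ne hxa hxb]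
          exact (htwin x hxa hxb).mp hx
    rw [SimpleGraph.degree, SimpleGraph.degree, himg,
      Finset.card_image_of_injective _ (Equiv.swap a b).injective]
  -- u is an eigenvector of L
  set lam : ℂ := (G.degree a : ℂ) + (if G.Adj a b then 1 else 0) with hlam
  have hsum : ∀ i : Fin n, ∑ w ∈ G.neighborFinset i, u w
      = (if G.Adj i a then 1 else 0) - (if G.Adj i b then 1 else 0) := by
    intro i
    simp only [hu, Pi.sub_apply, Finset.sum_sub_distrib, Finset.sum_pi_single',
      SimpleGraph.mem_neighborFinset]
  have hua : u a = 1 := by simp [hu, Pi.single_eq_of_ne hab]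
  have hub : u b = -1 := by simp [hu, Pi.single_eq_of_ne hab.symm]
  have heig : L *ᵥ u = lam • u := by
    funext i
    rw [hL, SimpleGraph.lapMatrix_mulVec_apply, hsum]
    rcases eq_or_ne i a with rfl | hia
    · by_cases hadj : G.Adj i b <;>
        simp [hua, hlam, G.irrefl, hadj] <;> ring
    rcases eq_or_ne i b with rfl | hib
    · by_cases hadj : G.Adj a i <;>
        simp [hub, hlam, G.irrefl, hadj, hdeg, G.adj_comm i a] <;> ring
    · have h1 : G.Adj i a ↔ G.Adj i b := by
        rw [G.adj_comm i a, G.adj_comm i b]; exact htwin i hia hib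
      simp [hu, hlam, Pi.single_eq_of_ne hia, Pi.single_eq_of_ne hib, h1]
  -- L commutes with M
  have hsymm : ∀ i j, L i j = L j i := by
    intro i j
    exact congrFun (congrFun (SimpleGraph.isSymm_lapMatrix G (R := ℂ)) j) i
  have hcomm : Commute L M := by
    have hLMv : ∀ i j, (L * M) i j = lam * u i * u j := by
      intro i j
      rw [Matrix.mul_apply]
      have : ∀ k, L i k * M k j = (L i k * u k) * u j := by
        intro k; rw [hM, Matrix.vecMulVec_apply]; ring
      rw [Finset.sum_congr rfl fun k _ => this k, ← Finset.sum_mul]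
      have : ∑ k, L i k * u k = (L *ᵥ u) i := rfl
      rw [this, heig]
      simp [mul_comm]
    have hMLv : ∀ i j, (M * L) i j = lam * u i * u j := by
      intro i j
      rw [Matrix.mul_apply]
      have : ∀ k, M i k * L k j = u i * (L j k * u k) := by
        intro k; rw [hM, Matrix.vecMulVec_apply, hsymm k j]; ring
      rw [Finset.sum_congr rfl fun k _ => this k, ← Finset.mul_sum]
      have : ∑ k, L j k * u k = (L *ᵥ u) j := rfl
      rw [this, heig]
      simp; ring
    funext i j
    rw [hLMv i j, hMLv i j]
  -- M kills v
  have hMv : M *ᵥ v = 0 := by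
    have hudv : u ⬝ᵥ v = 0 := by
      simp [hu, hv, sub_dotProduct, dotProduct_sub,
        single_dotProduct, Pi.single_eq_of_ne hca, Pi.single_eq_of_ne hcb,
        Pi.single_eq_of_ne hda, Pi.single_eq_of_ne hdb]
    funext i
    rw [hM]
    have : (vecMulVec u u *ᵥ v) i = u i * (u ⬝ᵥ v) := by
      simp [Matrix.mulVec, Matrix.vecMulVec_apply, dotProduct, Finset.mul_sum, mul_assoc]
    rw [this, hudv, mul_zero]
    rfl
  -- main
  intro ε hε
  obtain ⟨τ, hτ⟩ := hlpgst ε hε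
  refine ⟨τ, ?_⟩
  have hexp :
      (NormedSpace.exp ((-(Complex.I * (τ : ℂ))) • (L + (α : ℂ) • M))) *ᵥ v
        = (NormedSpace.exp ((-(Complex.I * (τ : ℂ))) • L)) *ᵥ v := by
    have hxy : Commute ((-(Complex.I * (τ : ℂ))) • L)
        ((-(Complex.I * (τ : ℂ))) • ((α : ℂ) • M)) :=
      ((hcomm.smul_right ((α : ℂ))).smul_left _).smul_right _
    have hsplit : (-(Complex.I * (τ : ℂ))) • (L + (α : ℂ) • M)
        = (-(Complex.I * (τ : ℂ))) • L + (-(Complex.I * (τ : ℂ))) • ((α : ℂ) • M) := by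
      rw [smul_add]
    have hYv : (NormedSpace.exp ((-(Complex.I * (τ : ℂ))) • ((α : ℂ) • M))) *ᵥ v = v := by
      apply exp_mulVec_of_mulVec_eq_zero
      rw [Matrix.smul_mulVec, Matrix.smul_mulVec, hMv, smul_zero, smul_zero]
    rw [hsplit, Matrix.exp_add_of_commute _ _ hxy, ← Matrix.mulVec_mulVec, hYv]
  rw [← hu, ← hv, ← hL, ← hM] at *
  rw [hexp]
  exact hτ
end

section
/- Let K_{2,4n} be the complete bipartite graph with parts {a,b} (size 2) and {1,...,4n}, with Laplacian L. Then for each i ∈ {1,...,4n}, K_{2,4n} has Pair-LPST from e_a - e_i to e_b - e_i at time π/2: exp(-i(π/2)L)(e_a - e_i) = γ(e_b - e_i) for some unimodular complex γ. -/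
open Matrix Complex Nat

/-- If `x` is an eigenvector of `A` with eigenvalue `μ`, then applying the matrix
exponential of `A` to `x` scales it by `Complex.exp μ`. -/
lemma exp_mulVec_eigenvector {V : Type*} [Fintype V] [DecidableEq V]
    (A : Matrix V V ℂ) (x : V → ℂ) (μ : ℂ) (h : A.mulVec x = μ • x) :
    (NormedSpace.exp A).mulVec x = Complex.exp μ • x := by
  letI : SeminormedRing (Matrix V V ℂ) := Matrix.linftyOpSemiNormedRing
  letI : NormedRing (Matrix V V ℂ) := Matrix.linftyOpNormedRing
  letI : NormedAlgebra ℂ (Matrix V V ℂ) := Matrix.linftyOpNormedAlgebra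
  have hpow : ∀ k : ℕ, (A ^ k).mulVec x = μ ^ k • x := by
    intro k
    induction k with
    | zero => simp
    | succ k ih =>
      rw [pow_succ, ← Matrix.mulVec_mulVec, h, Matrix.mulVec_smul, ih,
        smul_smul, pow_succ, mul_comm]
  let f : Matrix V V ℂ →ₗ[ℂ] (V → ℂ) :=
    { toFun := fun M => M.mulVec x
      map_add' := fun M N => Matrix.add_mulVec M N x
      map_smul' := fun c M => by simp [Matrix.smul_mulVec] }
  let f' : Matrix V V ℂ →L[ℂ] (V → ℂ) := LinearMap.toContinuousLinearMap f
  have hs1 : HasSum (fun k : ℕ => (k !⁻¹ : ℂ) • A ^ k) (NormedSpace.exp A) :=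
    NormedSpace.exp_series_hasSum_exp' A
  have hs2 : HasSum (fun k : ℕ => f' ((k !⁻¹ : ℂ) • A ^ k))
      (f' (NormedSpace.exp A)) := hs1.mapL f'
  have heq : (fun k : ℕ => f' ((k !⁻¹ : ℂ) • A ^ k)) =
      fun k : ℕ => ((k !⁻¹ : ℂ) • μ ^ k) • x := by
    funext k
    show ((k !⁻¹ : ℂ) • A ^ k).mulVec x = _
    rw [Matrix.smul_mulVec, hpow, smul_smul, smul_eq_mul]
  rw [heq] at hs2
  have hs3 : HasSum (fun k : ℕ => ((k !⁻¹ : ℂ) • μ ^ k) • x)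
      (Complex.exp μ • x) := by
    have := (NormedSpace.exp_series_hasSum_exp' (𝕂 := ℂ) μ).smul_const x
    rwa [← Complex.exp_eq_exp_ℂ] at this
  exact hs2.unique hs3

lemma cbg_lap_mulVec_left {n : ℕ}
    [inst : DecidableRel (completeBipartiteGraph (Fin 2) (Fin (4 * n))).Adj]
    (vec : Fin 2 ⊕ Fin (4 * n) → ℂ) (p : Fin 2) :
    ((completeBipartiteGraph (Fin 2) (Fin (4 * n))).lapMatrix ℂ *ᵥ vec) (Sum.inl p)
      = (4 * n : ℂ) * vec (Sum.inl p) - ∑ j, vec (Sum.inr j) := by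
  rw [SimpleGraph.lapMatrix_mulVec_apply]
  have hnb : (completeBipartiteGraph (Fin 2) (Fin (4 * n))).neighborFinset (Sum.inl p)
      = Finset.univ.map ⟨Sum.inr, Sum.inr_injective⟩ := by
    ext u
    cases u <;> simp only [SimpleGraph.mem_neighborFinset] <;> simp [completeBipartiteGraph]
  rw [SimpleGraph.degree, hnb, Finset.sum_map]
  simp

lemma cbg_lap_mulVec_right {n : ℕ}
    [inst : DecidableRel (completeBipartiteGraph (Fin 2) (Fin (4 * n))).Adj]
    (vec : Fin 2 ⊕ Fin (4 * n) → ℂ) (j : Fin (4 * n)) :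
    ((completeBipartiteGraph (Fin 2) (Fin (4 * n))).lapMatrix ℂ *ᵥ vec) (Sum.inr j)
      = 2 * vec (Sum.inr j) - (vec (Sum.inl 0) + vec (Sum.inl 1)) := by
  rw [SimpleGraph.lapMatrix_mulVec_apply]
  have hnb : (completeBipartiteGraph (Fin 2) (Fin (4 * n))).neighborFinset (Sum.inr j)
      = Finset.univ.map ⟨Sum.inl, Sum.inl_injective⟩ := by
    ext u
    cases u <;> simp only [SimpleGraph.mem_neighborFinset] <;> simp [completeBipartiteGraph]
  rw [SimpleGraph.degree, hnb, Finset.sum_map]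
  simp [Fin.sum_univ_two]

theorem complete_bipartite_K2_4n_pair_lpst
    {n : ℕ} (hn : 1 ≤ n)
    [inst : DecidableRel (completeBipartiteGraph (Fin 2) (Fin (4 * n))).Adj]
    (i : Fin (4 * n)) :
    ∃ γ : ℂ, ‖γ‖ = 1 ∧
      (NormedSpace.exp ((-(Complex.I * ((Real.pi / 2 : ℝ) : ℂ))) •
          (completeBipartiteGraph (Fin 2) (Fin (4 * n))).lapMatrix ℂ)).mulVec
          ((Pi.single (Sum.inl 0) 1 : Fin 2 ⊕ Fin (4 * n) → ℂ) - Pi.single (Sum.inr i) 1)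
        = γ • ((Pi.single (Sum.inl 1) 1 : Fin 2 ⊕ Fin (4 * n) → ℂ) - Pi.single (Sum.inr i) 1) := by
  set L := (completeBipartiteGraph (Fin 2) (Fin (4 * n))).lapMatrix ℂ with hL
  set c : ℂ := -(Complex.I * ((Real.pi / 2 : ℝ) : ℂ)) with hc
  set A : Matrix (Fin 2 ⊕ Fin (4 * n)) (Fin 2 ⊕ Fin (4 * n)) ℂ := c • L with hA
  have hm : (4 * n : ℂ) ≠ 0 := by
    have h0 : (4 * n : ℕ) ≠ 0 := by omega
    exact_mod_cast Nat.cast_ne_zero.mpr h0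
  have hn' : (n : ℂ) ≠ 0 := by exact_mod_cast (show n ≠ 0 by omega)
  -- the three eigenvectors
  set v1 : Fin 2 ⊕ Fin (4 * n) → ℂ :=
    Sum.elim (fun p => if p = 0 then (2⁻¹ : ℂ) else -2⁻¹) (fun _ => 0) with hv1
  set v2 : Fin 2 ⊕ Fin (4 * n) → ℂ :=
    Sum.elim (fun _ => (2⁻¹ : ℂ)) (fun _ => -(4 * n : ℂ)⁻¹) with hv2
  set v3 : Fin 2 ⊕ Fin (4 * n) → ℂ :=
    Sum.elim (fun _ => (0 : ℂ)) (fun j => if j = i then -1 + (4 * n : ℂ)⁻¹ else (4 * n : ℂ)⁻¹)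
    with hv3
  have e1 : L.mulVec v1 = (4 * n : ℂ) • v1 := by
    funext x
    cases x with
    | inl p =>
      rw [hL, cbg_lap_mulVec_left]
      simp [hv1]
    | inr j =>
      rw [hL, cbg_lap_mulVec_right]
      simp [hv1]
  have e2 : L.mulVec v2 = ((4 * n : ℂ) + 2) • v2 := by
    funext x
    cases x with
    | inl p =>
      rw [hL, cbg_lap_mulVec_left]
      simp only [hv2, Sum.elim_inl, Sum.elim_inr, Finset.sum_const, Finset.card_univ,
        Fintype.card_fin, nsmul_eq_mul, Pi.smul_apply, smul_eq_mul]
      push_cast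
      field_simp
      try ring
    | inr j =>
      rw [hL, cbg_lap_mulVec_right]
      simp only [hv2, Sum.elim_inl, Sum.elim_inr, Pi.smul_apply, smul_eq_mul]
      field_simp
      try ring
  have e3 : L.mulVec v3 = (2 : ℂ) • v3 := by
    have hfun : (fun j => v3 (Sum.inr j)) =
        fun j => (4 * n : ℂ)⁻¹ + (if j = i then -1 else 0) := by
      funext j
      by_cases h : j = i <;> simp [hv3, h] <;> try ring
    have hsum : ∑ j, v3 (Sum.inr j) = 0 := by
      rw [hfun, Finset.sum_add_distrib]
      simp only [Finset.sum_ite_eq' Finset.univ i, Finset.mem_univ, if_true,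
        Finset.sum_const, Finset.card_univ, Fintype.card_fin, nsmul_eq_mul]
      push_cast
      field_simp
      norm_num
    funext x
    cases x with
    | inl p =>
      rw [hL, cbg_lap_mulVec_left, hsum]
      simp [hv3]
    | inr j =>
      rw [hL, cbg_lap_mulVec_right]
      simp [hv3]
      try ring
  -- eigen equations for A
  have f1 : A.mulVec v1 = (c * (4 * n : ℂ)) • v1 := by
    rw [hA, Matrix.smul_mulVec, e1, smul_smul]
  have f2 : A.mulVec v2 = (c * ((4 * n : ℂ) + 2)) • v2 := by
    rw [hA, Matrix.smul_mulVec, e2, smul_smul]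
  have f3 : A.mulVec v3 = (c * 2) • v3 := by
    rw [hA, Matrix.smul_mulVec, e3, smul_smul]
  have g1 := exp_mulVec_eigenvector A v1 _ f1
  have g2 := exp_mulVec_eigenvector A v2 _ f2
  have g3 := exp_mulVec_eigenvector A v3 _ f3
  -- values of the exponentials
  have hx1 : Complex.exp (c * (4 * n : ℂ)) = 1 := by
    have h1 : c * (4 * n : ℂ) = ((-(n : ℤ) : ℤ) : ℂ) * (2 * Real.pi * Complex.I) := by
      rw [hc]; push_cast; ring
    rw [h1, Complex.exp_int_mul_two_pi_mul_I]
  have hx2 : Complex.exp (c * 2) = -1 := by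
    have h2 : c * 2 = -((Real.pi : ℂ) * Complex.I) := by rw [hc]; push_cast; ring
    rw [h2, Complex.exp_neg, Complex.exp_pi_mul_I]
    norm_num
  have hx3 : Complex.exp (c * ((4 * n : ℂ) + 2)) = -1 := by
    rw [mul_add, Complex.exp_add, hx1, hx2, one_mul]
  -- decomposition of the initial vector
  have hdecomp : ((Pi.single (Sum.inl 0) 1 : Fin 2 ⊕ Fin (4 * n) → ℂ)
      - Pi.single (Sum.inr i) 1) = v1 + v2 + v3 := by
    funext x
    cases x with
    | inl p =>
      fin_cases p <;>
        simp [hv1, hv2, hv3, Pi.single_apply] <;> norm_num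
    | inr j =>
      by_cases h : j = i <;>
        simp [hv1, hv2, hv3, Pi.single_apply, h] <;> ring
  refine ⟨-1, by simp, ?_⟩
  rw [hdecomp, Matrix.mulVec_add, Matrix.mulVec_add, g1, g2, g3, hx1, hx2, hx3]
  funext x
  cases x with
  | inl p =>
    fin_cases p <;>
      simp [hv1, hv2, hv3, Pi.single_apply] <;> norm_num
  | inr j =>
    by_cases h : j = i <;>
      simp [hv1, hv2, hv3, Pi.single_apply, h] <;> ring
end
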